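/- Let α₀ be a real number with 0 < α₀ < 1/4 and set β := 1 − 2α₀ and γ := 2 − 2α₀. For each nonzero integer ℓ define F_ℓ := ∑_{m ∈ ℤ, m ≠ 0, m ≠ ℓ} 1/(|m|^{γ} |m − ℓ|^{β}). Then ∑_{ℓ ∈ ℤ, ℓ ≠ 0} F_ℓ² ≤ 8 ζ(γ)² ζ(2β), and consequently ∑_{ℓ ∈ ℤ, ℓ ≠ 0} F_ℓ²/|ℓ| ≤ 8 ζ(γ)² ζ(2β). -/

import Mathlib

/-- `ζ(s) = ∑_{n≥1} n^{-s}` for real `s`. -/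
noncomputable def zetaR (s : ℝ) : ℝ := ∑' n : ℕ, 1 / ((n : ℝ) + 1) ^ s

/-- Cauchy–Schwarz for tsums of nonnegative reals. -/
lemma tsum_cs {ι : Type*} (f g : ι → ℝ) (hf0 : ∀ i, 0 ≤ f i) (hg0 : ∀ i, 0 ≤ g i)
    (hf : Summable fun i => f i ^ 2) (hg : Summable fun i => g i ^ 2) :
    Summable (fun i => f i * g i) ∧
      (∑' i, f i * g i) ^ 2 ≤ (∑' i, f i ^ 2) * (∑' i, g i ^ 2) := by
  have hsum : Summable (fun i => f i * g i) := by
    refine Summable.of_nonneg_of_le (fun i => mul_nonneg (hf0 i) (hg0 i)) (fun i => ?_)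
      (hf.add hg)
    nlinarith [sq_nonneg (f i - g i)]
  refine ⟨hsum, ?_⟩
  have hA : 0 ≤ ∑' i, f i ^ 2 := tsum_nonneg fun i => sq_nonneg _
  have hB : 0 ≤ ∑' i, g i ^ 2 := tsum_nonneg fun i => sq_nonneg _
  have key : ∑' i, f i * g i ≤ Real.sqrt ((∑' i, f i ^ 2) * (∑' i, g i ^ 2)) := by
    refine Summable.tsum_le_of_sum_le hsum fun s => ?_
    have h1 : (∑ i ∈ s, f i * g i) ^ 2 ≤ (∑ i ∈ s, f i ^ 2) * ∑ i ∈ s, g i ^ 2 :=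
      Finset.sum_mul_sq_le_sq_mul_sq s f g
    have h2 : (∑ i ∈ s, f i ^ 2) * (∑ i ∈ s, g i ^ 2) ≤ (∑' i, f i ^ 2) * (∑' i, g i ^ 2) :=
      mul_le_mul (Summable.sum_le_tsum s (fun i _ => sq_nonneg _) hf)
        (Summable.sum_le_tsum s (fun i _ => sq_nonneg _) hg)
        (Finset.sum_nonneg fun i _ => sq_nonneg _) hA
    exact (Real.le_sqrt (Finset.sum_nonneg fun i _ => mul_nonneg (hf0 i) (hg0 i))
      (mul_nonneg hA hB)).mpr (h1.trans h2)
  calc (∑' i, f i * g i) ^ 2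
      ≤ Real.sqrt ((∑' i, f i ^ 2) * (∑' i, g i ^ 2)) ^ 2 :=
        pow_le_pow_left₀ (tsum_nonneg fun i => mul_nonneg (hf0 i) (hg0 i)) key 2
    _ = (∑' i, f i ^ 2) * (∑' i, g i ^ 2) := Real.sq_sqrt (mul_nonneg hA hB)

/-- The sum of `1/|m|^s` over nonzero integers is `2 ζ(s)`. -/
lemma hasSum_nz (s : ℝ) (hs : 1 < s) :
    HasSum (fun m : {m : ℤ // m ≠ 0} => 1 / |(m.1 : ℝ)| ^ s) (2 * zetaR s) := by
  have hζ : Summable (fun n : ℕ => 1 / ((n : ℝ) + 1) ^ s) := by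
    have h0 : Summable (fun n : ℕ => 1 / (n : ℝ) ^ s) :=
      Real.summable_one_div_nat_rpow.mpr hs
    have h1 : Summable (fun n : ℕ => 1 / ((n + 1 : ℕ) : ℝ) ^ s) :=
      (summable_nat_add_iff 1).mpr h0
    convert h1 using 2 with n
    push_cast; ring_nf
  set F : ℤ → ℝ := fun m => if m = 0 then 0 else 1 / |(m : ℝ)| ^ s with hF
  have hpos : (fun n : ℕ => F ((n : ℤ) + 1)) = fun n : ℕ => 1 / ((n : ℝ) + 1) ^ s := by
    funext n
    have h1 : ((n : ℤ) + 1) ≠ 0 := by positivity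
    have h2 : |(((n : ℤ) + 1 : ℤ) : ℝ)| = (n : ℝ) + 1 := by
      push_cast; rw [abs_of_pos (by positivity)]
    simp only [hF, if_neg h1]
    rw [h2]
  have hneg : (fun n : ℕ => F (-((n : ℤ) + 1))) = fun n : ℕ => 1 / ((n : ℝ) + 1) ^ s := by
    funext n
    have h1 : (-((n : ℤ) + 1)) ≠ 0 := by intro h; omega
    have h2 : |((-((n : ℤ) + 1) : ℤ) : ℝ)| = (n : ℝ) + 1 := by
      push_cast; rw [abs_neg, abs_of_pos (by positivity)]
    simp only [hF, if_neg h1]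
    rw [h2]
  have hFsum : HasSum F (zetaR s + F 0 + zetaR s) := by
    refine HasSum.of_add_one_of_neg_add_one ?_ ?_
    · rw [hpos]; exact hζ.hasSum
    · rw [hneg]; exact hζ.hasSum
  have hind : Set.indicator {m : ℤ | m ≠ 0} (fun m : ℤ => 1 / |(m : ℝ)| ^ s) = F := by
    funext m
    by_cases h : m = 0
    · simp [hF, h]
    · simp [hF, h, Set.indicator_of_mem, Set.mem_setOf_eq]
  have h0 : F 0 = 0 := by simp [hF]
  have hmain : HasSum (fun m : {m : ℤ // m ≠ 0} => 1 / |(m.1 : ℝ)| ^ s)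
      (zetaR s + F 0 + zetaR s) :=
    (hasSum_subtype_iff_indicator (f := fun m : ℤ => 1 / |(m : ℝ)| ^ s)
      (s := {m : ℤ | m ≠ 0})).mpr (hind ▸ hFsum)
  rw [h0] at hmain
  convert hmain using 1
  ring

set_option maxHeartbeats 2000000 in
/-- An `ℓ²` bound for the fully off-diagonal kernel: for `0 < α₀ < 1/4`,
`β = 1−2α₀`, `γ = 2−2α₀`, and
`F_ℓ = ∑_{m≠0, m≠ℓ} 1/(|m|^γ |m−ℓ|^β)`, one has
`∑_{ℓ≠0} F_ℓ² ≤ 8ζ(γ)²ζ(2β)` and consequently `∑_{ℓ≠0} F_ℓ²/|ℓ| ≤ 8ζ(γ)²ζ(2β)`. -/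
theorem stmt13 (α₀ : ℝ) (h0 : 0 < α₀) (h1 : α₀ < 1 / 4) :
    (Summable (fun ℓ : {ℓ : ℤ // ℓ ≠ 0} =>
        (∑' m : {m : ℤ // m ≠ 0 ∧ m ≠ ℓ.1},
            1 / (|(m.1 : ℝ)| ^ (2 - 2 * α₀) * |(m.1 : ℝ) - (ℓ.1 : ℝ)| ^ (1 - 2 * α₀))) ^ 2) ∧
      ∑' ℓ : {ℓ : ℤ // ℓ ≠ 0},
          (∑' m : {m : ℤ // m ≠ 0 ∧ m ≠ ℓ.1},
              1 / (|(m.1 : ℝ)| ^ (2 - 2 * α₀) * |(m.1 : ℝ) - (ℓ.1 : ℝ)| ^ (1 - 2 * α₀))) ^ 2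
        ≤ 8 * zetaR (2 - 2 * α₀) ^ 2 * zetaR (2 * (1 - 2 * α₀))) ∧
    (Summable (fun ℓ : {ℓ : ℤ // ℓ ≠ 0} =>
        (∑' m : {m : ℤ // m ≠ 0 ∧ m ≠ ℓ.1},
            1 / (|(m.1 : ℝ)| ^ (2 - 2 * α₀) * |(m.1 : ℝ) - (ℓ.1 : ℝ)| ^ (1 - 2 * α₀))) ^ 2
          / |(ℓ.1 : ℝ)|) ∧
      ∑' ℓ : {ℓ : ℤ // ℓ ≠ 0},
          (∑' m : {m : ℤ // m ≠ 0 ∧ m ≠ ℓ.1},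
              1 / (|(m.1 : ℝ)| ^ (2 - 2 * α₀) * |(m.1 : ℝ) - (ℓ.1 : ℝ)| ^ (1 - 2 * α₀))) ^ 2
            / |(ℓ.1 : ℝ)|
        ≤ 8 * zetaR (2 - 2 * α₀) ^ 2 * zetaR (2 * (1 - 2 * α₀))) := by
  set γ : ℝ := 2 - 2 * α₀ with hγdef
  set β : ℝ := 1 - 2 * α₀ with hβdef
  have hγ1 : 1 < γ := by rw [hγdef]; linarith
  have h2β1 : 1 < 2 * β := by rw [hβdef]; linarith
  have hβ0 : 0 < β := by rw [hβdef]; linarith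
  have hγ0 : 0 < γ := by linarith
  -- basic facts about nonzero integers
  have habs : ∀ m : ℤ, m ≠ 0 → 1 ≤ |(m : ℝ)| := by
    intro m hm
    rw [← Int.cast_abs]
    exact_mod_cast Int.one_le_abs hm
  have habs0 : ∀ m : ℤ, m ≠ 0 → 0 < |(m : ℝ)| :=
    fun m hm => lt_of_lt_of_le one_pos (habs m hm)
  have hZnn : ∀ t : ℝ, 0 ≤ zetaR t := fun t => tsum_nonneg (fun n => by positivity)
  have hZγ := hasSum_nz γ hγ1
  have hZ2β := hasSum_nz (2 * β) h2β1
  -- the product kernel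
  have hH : Summable (fun p : {ℓ : ℤ // ℓ ≠ 0} × {ℓ : ℤ // ℓ ≠ 0} =>
      (1 / |(p.1.1 : ℝ)| ^ γ) * (1 / |(p.2.1 : ℝ)| ^ (2 * β))) :=
    hZγ.summable.mul_of_nonneg hZ2β.summable (fun a => by positivity) (fun b => by positivity)
  have hHsum : ∑' p : {ℓ : ℤ // ℓ ≠ 0} × {ℓ : ℤ // ℓ ≠ 0},
      (1 / |(p.1.1 : ℝ)| ^ γ) * (1 / |(p.2.1 : ℝ)| ^ (2 * β))
      = (2 * zetaR γ) * (2 * zetaR (2 * β)) := by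
    rw [Summable.tsum_prod hH]
    have h1 : ∀ a : {ℓ : ℤ // ℓ ≠ 0},
        ∑' b : {ℓ : ℤ // ℓ ≠ 0}, (1 / |(a.1 : ℝ)| ^ γ) * (1 / |(b.1 : ℝ)| ^ (2 * β))
        = (1 / |(a.1 : ℝ)| ^ γ) * (2 * zetaR (2 * β)) := by
      intro a
      rw [tsum_mul_left, hZ2β.tsum_eq]
    calc ∑' (a : {ℓ : ℤ // ℓ ≠ 0}) (b : {ℓ : ℤ // ℓ ≠ 0}),
          (1 / |(a.1 : ℝ)| ^ γ) * (1 / |(b.1 : ℝ)| ^ (2 * β))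
        = ∑' a : {ℓ : ℤ // ℓ ≠ 0}, (1 / |(a.1 : ℝ)| ^ γ) * (2 * zetaR (2 * β)) :=
          tsum_congr h1
      _ = (2 * zetaR γ) * (2 * zetaR (2 * β)) := by rw [tsum_mul_right, hZγ.tsum_eq]
  -- the sigma-type reindexing
  have φinj : Function.Injective
      (fun x : (Σ ℓ : {ℓ : ℤ // ℓ ≠ 0}, {m : ℤ // m ≠ 0 ∧ m ≠ ℓ.1}) =>
        ((⟨x.2.1, x.2.2.1⟩, ⟨x.2.1 - x.1.1, sub_ne_zero.mpr x.2.2.2⟩) :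
          {ℓ : ℤ // ℓ ≠ 0} × {ℓ : ℤ // ℓ ≠ 0})) := by
    rintro ⟨⟨l, hl⟩, ⟨m, hm⟩⟩ ⟨⟨l', hl'⟩, ⟨m', hm'⟩⟩ h
    simp only [Prod.mk.injEq, Subtype.mk.injEq] at h
    obtain ⟨h1, h2⟩ := h
    have hll : l = l' := by omega
    have hmm : m = m' := h1
    subst hll; subst hmm; rfl
  have hHφ : Summable ((fun p : {ℓ : ℤ // ℓ ≠ 0} × {ℓ : ℤ // ℓ ≠ 0} =>
      (1 / |(p.1.1 : ℝ)| ^ γ) * (1 / |(p.2.1 : ℝ)| ^ (2 * β))) ∘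
      (fun x : (Σ ℓ : {ℓ : ℤ // ℓ ≠ 0}, {m : ℤ // m ≠ 0 ∧ m ≠ ℓ.1}) =>
        ((⟨x.2.1, x.2.2.1⟩, ⟨x.2.1 - x.1.1, sub_ne_zero.mpr x.2.2.2⟩) :
          {ℓ : ℤ // ℓ ≠ 0} × {ℓ : ℤ // ℓ ≠ 0}))) :=
    hH.comp_injective φinj
  have hHφ' : Summable (fun x : (Σ ℓ : {ℓ : ℤ // ℓ ≠ 0}, {m : ℤ // m ≠ 0 ∧ m ≠ ℓ.1}) =>
      (1 / |(x.2.1 : ℝ)| ^ γ) * (1 / |((x.2.1 - x.1.1 : ℤ) : ℝ)| ^ (2 * β))) := by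
    exact Summable.congr hHφ (fun x => by simp only [Function.comp_apply])
  have hGfib : ∀ ℓ : {ℓ : ℤ // ℓ ≠ 0}, Summable (fun m : {m : ℤ // m ≠ 0 ∧ m ≠ ℓ.1} =>
      (1 / |(m.1 : ℝ)| ^ γ) * (1 / |((m.1 - ℓ.1 : ℤ) : ℝ)| ^ (2 * β))) :=
    fun ℓ => hHφ'.sigma_factor ℓ
  have hG : Summable (fun ℓ : {ℓ : ℤ // ℓ ≠ 0} =>
      ∑' m : {m : ℤ // m ≠ 0 ∧ m ≠ ℓ.1},
        (1 / |(m.1 : ℝ)| ^ γ) * (1 / |((m.1 - ℓ.1 : ℤ) : ℝ)| ^ (2 * β))) :=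
    hHφ'.sigma
  have hGsum : ∑' ℓ : {ℓ : ℤ // ℓ ≠ 0},
      ∑' m : {m : ℤ // m ≠ 0 ∧ m ≠ ℓ.1},
        (1 / |(m.1 : ℝ)| ^ γ) * (1 / |((m.1 - ℓ.1 : ℤ) : ℝ)| ^ (2 * β))
      ≤ (2 * zetaR γ) * (2 * zetaR (2 * β)) := by
    rw [← Summable.tsum_sigma hHφ', ← hHsum]
    refine Summable.tsum_le_tsum_of_inj _ φinj (fun c _ => by positivity) (fun b => le_rfl) hHφ' hH
  have hGnn : ∀ ℓ : {ℓ : ℤ // ℓ ≠ 0},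
      0 ≤ ∑' m : {m : ℤ // m ≠ 0 ∧ m ≠ ℓ.1},
        (1 / |(m.1 : ℝ)| ^ γ) * (1 / |((m.1 - ℓ.1 : ℤ) : ℝ)| ^ (2 * β)) :=
    fun ℓ => tsum_nonneg (fun m => by positivity)
  -- the key per-ℓ Cauchy–Schwarz estimate
  have key : ∀ ℓ : {ℓ : ℤ // ℓ ≠ 0},
      (∑' m : {m : ℤ // m ≠ 0 ∧ m ≠ ℓ.1},
          1 / (|(m.1 : ℝ)| ^ γ * |(m.1 : ℝ) - (ℓ.1 : ℝ)| ^ β)) ^ 2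
        ≤ (2 * zetaR γ) * ∑' m : {m : ℤ // m ≠ 0 ∧ m ≠ ℓ.1},
            (1 / |(m.1 : ℝ)| ^ γ) * (1 / |((m.1 - ℓ.1 : ℤ) : ℝ)| ^ (2 * β)) := by
    intro ℓ
    have hx0 : ∀ m : {m : ℤ // m ≠ 0 ∧ m ≠ ℓ.1}, 0 < |(m.1 : ℝ)| :=
      fun m => habs0 m.1 m.2.1
    have hycast : ∀ m : {m : ℤ // m ≠ 0 ∧ m ≠ ℓ.1},
        |((m.1 - ℓ.1 : ℤ) : ℝ)| = |(m.1 : ℝ) - (ℓ.1 : ℝ)| := by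
      intro m; push_cast; rfl
    have hy1 : ∀ m : {m : ℤ // m ≠ 0 ∧ m ≠ ℓ.1}, 1 ≤ |(m.1 : ℝ) - (ℓ.1 : ℝ)| := by
      intro m
      rw [← hycast m]
      exact habs _ (sub_ne_zero.mpr m.2.2)
    have hy0 : ∀ m : {m : ℤ // m ≠ 0 ∧ m ≠ ℓ.1}, 0 < |(m.1 : ℝ) - (ℓ.1 : ℝ)| :=
      fun m => lt_of_lt_of_le one_pos (hy1 m)
    set f : {m : ℤ // m ≠ 0 ∧ m ≠ ℓ.1} → ℝ := fun m => 1 / |(m.1 : ℝ)| ^ (γ / 2) with hfdef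
    set g : {m : ℤ // m ≠ 0 ∧ m ≠ ℓ.1} → ℝ :=
      fun m => 1 / (|(m.1 : ℝ)| ^ (γ / 2) * |(m.1 : ℝ) - (ℓ.1 : ℝ)| ^ β) with hgdef
    have hf0 : ∀ m, 0 ≤ f m := fun m => by rw [hfdef]; positivity
    have hg0 : ∀ m, 0 ≤ g m := fun m => by rw [hgdef]; positivity
    have idfg : ∀ m, f m * g m
        = 1 / (|(m.1 : ℝ)| ^ γ * |(m.1 : ℝ) - (ℓ.1 : ℝ)| ^ β) := by
      intro m
      rw [hfdef, hgdef]
      rw [div_mul_div_comm, one_mul, ← mul_assoc, ← Real.rpow_add (hx0 m), add_halves]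
    have idf2 : ∀ m, f m ^ 2 = 1 / |(m.1 : ℝ)| ^ γ := by
      intro m
      rw [hfdef, pow_two, div_mul_div_comm, one_mul, ← Real.rpow_add (hx0 m), add_halves]
    have idg2 : ∀ m, g m ^ 2
        = (1 / |(m.1 : ℝ)| ^ γ) * (1 / |((m.1 - ℓ.1 : ℤ) : ℝ)| ^ (2 * β)) := by
      intro m
      have hsq : (|(m.1 : ℝ)| ^ (γ / 2) * |(m.1 : ℝ) - (ℓ.1 : ℝ)| ^ β) ^ 2
          = |(m.1 : ℝ)| ^ γ * |(m.1 : ℝ) - (ℓ.1 : ℝ)| ^ (2 * β) := by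
        rw [mul_pow, pow_two, pow_two, ← Real.rpow_add (hx0 m), ← Real.rpow_add (hy0 m),
          add_halves, ← two_mul]
      rw [hgdef, div_pow, one_pow, hsq, hycast m, ← one_div_mul_one_div]
    -- summability of f²
    have hι : Function.Injective (fun m : {m : ℤ // m ≠ 0 ∧ m ≠ ℓ.1} =>
        (⟨m.1, m.2.1⟩ : {m : ℤ // m ≠ 0})) := by
      intro a b h
      have h2 : ((⟨a.1, a.2.1⟩ : {m : ℤ // m ≠ 0})).val
          = ((⟨b.1, b.2.1⟩ : {m : ℤ // m ≠ 0})).val := congrArg Subtype.val h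
      exact Subtype.ext h2
    have hfsqc : Summable ((fun m : {m : ℤ // m ≠ 0} => 1 / |(m.1 : ℝ)| ^ γ) ∘
        (fun m : {m : ℤ // m ≠ 0 ∧ m ≠ ℓ.1} => (⟨m.1, m.2.1⟩ : {m : ℤ // m ≠ 0}))) :=
      hZγ.summable.comp_injective hι
    have hfsq : Summable (fun m : {m : ℤ // m ≠ 0 ∧ m ≠ ℓ.1} => 1 / |(m.1 : ℝ)| ^ γ) :=
      Summable.congr hfsqc (fun m => rfl)
    have hfsq' : Summable (fun m => f m ^ 2) := by
      have : (fun m => f m ^ 2) = (fun m : {m : ℤ // m ≠ 0 ∧ m ≠ ℓ.1} => 1 / |(m.1 : ℝ)| ^ γ) :=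
        funext idf2
      rw [this]; exact hfsq
    have hfsqle : ∑' m : {m : ℤ // m ≠ 0 ∧ m ≠ ℓ.1}, f m ^ 2 ≤ 2 * zetaR γ := by
      rw [funext idf2, ← hZγ.tsum_eq]
      exact Summable.tsum_le_tsum_of_inj _ hι (fun c _ => by positivity) (fun b => le_rfl)
        hfsq hZγ.summable
    -- summability of g²
    have hgsq' : Summable (fun m => g m ^ 2) := by
      have : (fun m => g m ^ 2) = (fun m : {m : ℤ // m ≠ 0 ∧ m ≠ ℓ.1} =>
          (1 / |(m.1 : ℝ)| ^ γ) * (1 / |((m.1 - ℓ.1 : ℤ) : ℝ)| ^ (2 * β))) :=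
        funext idg2
      rw [this]; exact hGfib ℓ
    obtain ⟨hsumfg, hCS⟩ := tsum_cs f g hf0 hg0 hfsq' hgsq'
    have hFeq : (∑' m : {m : ℤ // m ≠ 0 ∧ m ≠ ℓ.1},
        1 / (|(m.1 : ℝ)| ^ γ * |(m.1 : ℝ) - (ℓ.1 : ℝ)| ^ β)) = ∑' m, f m * g m :=
      (tsum_congr idfg).symm
    have hgeq : (∑' m, g m ^ 2) = ∑' m : {m : ℤ // m ≠ 0 ∧ m ≠ ℓ.1},
        (1 / |(m.1 : ℝ)| ^ γ) * (1 / |((m.1 - ℓ.1 : ℤ) : ℝ)| ^ (2 * β)) :=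
      tsum_congr idg2
    rw [hFeq]
    calc (∑' m, f m * g m) ^ 2
        ≤ (∑' m, f m ^ 2) * (∑' m, g m ^ 2) := hCS
      _ ≤ (2 * zetaR γ) * (∑' m, g m ^ 2) := by
          apply mul_le_mul_of_nonneg_right hfsqle
          exact tsum_nonneg fun m => sq_nonneg _
      _ = (2 * zetaR γ) * ∑' m : {m : ℤ // m ≠ 0 ∧ m ≠ ℓ.1},
            (1 / |(m.1 : ℝ)| ^ γ) * (1 / |((m.1 - ℓ.1 : ℤ) : ℝ)| ^ (2 * β)) := by rw [hgeq]
  -- assemble part 1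
  have hF2sum : Summable (fun ℓ : {ℓ : ℤ // ℓ ≠ 0} =>
      (∑' m : {m : ℤ // m ≠ 0 ∧ m ≠ ℓ.1},
        1 / (|(m.1 : ℝ)| ^ γ * |(m.1 : ℝ) - (ℓ.1 : ℝ)| ^ β)) ^ 2) := by
    refine Summable.of_nonneg_of_le (fun ℓ => sq_nonneg _) (fun ℓ => key ℓ) ?_
    exact hG.mul_left (2 * zetaR γ)
  have hfinal : ∑' ℓ : {ℓ : ℤ // ℓ ≠ 0},
      (∑' m : {m : ℤ // m ≠ 0 ∧ m ≠ ℓ.1},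
        1 / (|(m.1 : ℝ)| ^ γ * |(m.1 : ℝ) - (ℓ.1 : ℝ)| ^ β)) ^ 2
      ≤ 8 * zetaR γ ^ 2 * zetaR (2 * β) := by
    have step1 : ∑' ℓ : {ℓ : ℤ // ℓ ≠ 0},
        (∑' m : {m : ℤ // m ≠ 0 ∧ m ≠ ℓ.1},
          1 / (|(m.1 : ℝ)| ^ γ * |(m.1 : ℝ) - (ℓ.1 : ℝ)| ^ β)) ^ 2
        ≤ ∑' ℓ : {ℓ : ℤ // ℓ ≠ 0}, (2 * zetaR γ) *
            ∑' m : {m : ℤ // m ≠ 0 ∧ m ≠ ℓ.1},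
              (1 / |(m.1 : ℝ)| ^ γ) * (1 / |((m.1 - ℓ.1 : ℤ) : ℝ)| ^ (2 * β)) :=
      Summable.tsum_le_tsum (fun ℓ => key ℓ) hF2sum (hG.mul_left _)
    have step2 : ∑' ℓ : {ℓ : ℤ // ℓ ≠ 0}, (2 * zetaR γ) *
        ∑' m : {m : ℤ // m ≠ 0 ∧ m ≠ ℓ.1},
          (1 / |(m.1 : ℝ)| ^ γ) * (1 / |((m.1 - ℓ.1 : ℤ) : ℝ)| ^ (2 * β))
        ≤ (2 * zetaR γ) * ((2 * zetaR γ) * (2 * zetaR (2 * β))) := by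
      rw [tsum_mul_left]
      apply mul_le_mul_of_nonneg_left hGsum
      linarith [hZnn γ]
    have : (2 * zetaR γ) * ((2 * zetaR γ) * (2 * zetaR (2 * β)))
        = 8 * zetaR γ ^ 2 * zetaR (2 * β) := by ring
    linarith
  refine ⟨⟨hF2sum, hfinal⟩, ?_, ?_⟩
  · refine Summable.of_nonneg_of_le (fun ℓ => by positivity) (fun ℓ => ?_) hF2sum
    exact div_le_self (sq_nonneg _) (habs ℓ.1 ℓ.2)
  · have hle : ∑' ℓ : {ℓ : ℤ // ℓ ≠ 0},
        (∑' m : {m : ℤ // m ≠ 0 ∧ m ≠ ℓ.1},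
          1 / (|(m.1 : ℝ)| ^ γ * |(m.1 : ℝ) - (ℓ.1 : ℝ)| ^ β)) ^ 2 / |(ℓ.1 : ℝ)|
        ≤ ∑' ℓ : {ℓ : ℤ // ℓ ≠ 0},
        (∑' m : {m : ℤ // m ≠ 0 ∧ m ≠ ℓ.1},
          1 / (|(m.1 : ℝ)| ^ γ * |(m.1 : ℝ) - (ℓ.1 : ℝ)| ^ β)) ^ 2 := by
      refine Summable.tsum_le_tsum (fun ℓ => div_le_self (sq_nonneg _) (habs ℓ.1 ℓ.2)) ?_ hF2sum
      refine Summable.of_nonneg_of_le (fun ℓ => by positivity) (fun ℓ => ?_) hF2sum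
      exact div_le_self (sq_nonneg _) (habs ℓ.1 ℓ.2)
    exact hle.trans hfinal
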